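/- Theorem 2, product state case: If ρ = ρ_A ⊗ ρ_B is a product state, U = U_A ⊗ U_B, and X = X_A ⊗ X_B, then H_AFL(ρ, U, X, t) = H_AFL(ρ_A, U_A, X_A, t) + H_AFL(ρ_B, U_B, X_B, t) for all t. -/

import Mathlib

open scoped BigOperators ComplexOrder
open Matrix Kronecker

namespace AFL

variable {n : Type*} [Fintype n] [DecidableEq n]

/-- von Neumann entropy of a (Hermitian) matrix, via its eigenvalues. -/
noncomputable def vNEntropy (ρ : Matrix n n ℂ) : ℝ :=
  if h : ρ.IsHermitian then -∑ i, h.eigenvalues i * Real.log (h.eigenvalues i) else 0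

/-- A density matrix: positive semidefinite (hence Hermitian) with unit trace. -/
def IsDensity (ρ : Matrix n n ℂ) : Prop := ρ.PosSemidef ∧ ρ.trace = 1

/-- An operational partition of unity (Kraus operators of a channel). -/
def IsPartition {K : Type*} [Fintype K] (X : K → Matrix n n ℂ) : Prop :=
  ∑ i, (X i)ᴴ * X i = 1

/-- The entropy-exchange (environment) state ρ̃[X]_{ij} = Tr(Xⁱ ρ Xʲ†). -/
noncomputable def envState {K : Type*} [Fintype K] (X : K → Matrix n n ℂ)
    (ρ : Matrix n n ℂ) : Matrix K K ℂ :=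
  Matrix.of fun i j => (X i * ρ * (X j)ᴴ).trace

/-- Multitime Kraus operator U X^{i_t} ⋯ U X^{i_1} of the t-step evolved partition (UX)^t. -/
noncomputable def multiKraus {K : Type*} (U : Matrix n n ℂ) (X : K → Matrix n n ℂ)
    (t : ℕ) (idx : Fin t → K) : Matrix n n ℂ :=
  (List.ofFn fun k => U * X (idx k)).prod

/-- Cumulative AFL entropy: von Neumann entropy of the environment state after t steps. -/
noncomputable def HAFL {K : Type*} [Fintype K] [DecidableEq K]
    (ρ U : Matrix n n ℂ) (X : K → Matrix n n ℂ) (t : ℕ) : ℝ :=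
  vNEntropy (envState (multiKraus U X t) ρ)

/-- Shannon entropy of a probability vector. -/
noncomputable def shannon {ι : Type*} [Fintype ι] (p : ι → ℝ) : ℝ :=
  -∑ i, p i * Real.log (p i)

end AFL


section AFLaux

open Polynomial

namespace AFLaux

lemma roots_prod {κ : Type*} [Fintype κ] (d : κ → ℂ) :
    (∏ i : κ, (X - C (d i))).roots = Finset.univ.val.map d := by
  rw [Finset.prod_eq_multiset_prod]
  have : Multiset.map (fun i => X - C (d i)) Finset.univ.val
      = Multiset.map (fun a => X - C a) (Multiset.map d Finset.univ.val) := by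
    rw [Multiset.map_map]; rfl
  rw [this, Polynomial.roots_multiset_prod_X_sub_C]

lemma mul_log_mul {a b : ℝ} (ha : 0 ≤ a) (hb : 0 ≤ b) :
    (a * b) * Real.log (a * b) = b * (a * Real.log a) + a * (b * Real.log b) := by
  rcases eq_or_lt_of_le ha with h | h
  · simp [← h]
  rcases eq_or_lt_of_le hb with h' | h'
  · simp [← h']
  rw [Real.log_mul h.ne' h'.ne']; ring

lemma kron_conjTranspose {l m p q : Type*} (A : Matrix l m ℂ) (B : Matrix p q ℂ) :
    (A ⊗ₖ B)ᴴ = Aᴴ ⊗ₖ Bᴴ := by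
  ext ⟨i, j⟩ ⟨k, l⟩
  simp [Matrix.conjTranspose_apply, Matrix.kroneckerMap_apply, star_mul']

section Charpoly

variable {n : Type*} [Fintype n] [DecidableEq n]

lemma charpoly_conj {P M Q : Matrix n n ℂ} (h : P * Q = 1) :
    (P * M * Q).charpoly = M.charpoly := by
  unfold Matrix.charpoly
  have hPQ : ((C : ℂ →+* ℂ[X]).mapMatrix P) * ((C : ℂ →+* ℂ[X]).mapMatrix Q) = 1 := by
    rw [← _root_.map_mul, h, _root_.map_one]
  have hmap : Matrix.charmatrix (P * M * Q) =
      ((C : ℂ →+* ℂ[X]).mapMatrix P) * Matrix.charmatrix M * ((C : ℂ →+* ℂ[X]).mapMatrix Q) := by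
    rw [Matrix.charmatrix, Matrix.charmatrix, mul_sub, sub_mul, _root_.map_mul, _root_.map_mul]
    congr 1
    rw [mul_assoc, Matrix.scalar_commute (X : ℂ[X]) (Commute.all _) _, ← mul_assoc, hPQ, one_mul]
  rw [hmap, Matrix.det_mul, Matrix.det_mul, mul_comm,
    ← mul_assoc, mul_comm ((C : ℂ →+* ℂ[X]).mapMatrix Q).det, ← Matrix.det_mul, hPQ,
    Matrix.det_one, one_mul]

lemma charpoly_diagonal (d : n → ℂ) : (Matrix.diagonal d).charpoly = ∏ i, (X - C (d i)) := by
  unfold Matrix.charpoly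
  have h : Matrix.charmatrix (Matrix.diagonal d)
      = Matrix.diagonal (fun i => (X : ℂ[X]) - C (d i)) := by
    ext i j
    by_cases hij : i = j
    · subst hij; simp
    · simp [Matrix.charmatrix_apply_ne _ _ _ hij, Matrix.diagonal_apply_ne _ hij]
  rw [h, Matrix.det_diagonal]

lemma charpoly_eq_prod {A : Matrix n n ℂ} (hA : A.IsHermitian) :
    A.charpoly = ∏ i, (X - C ((hA.eigenvalues i : ℝ) : ℂ)) := by
  have h1 : (hA.eigenvectorUnitary : Matrix n n ℂ) * star (hA.eigenvectorUnitary : Matrix n n ℂ)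
      = 1 := (Matrix.mem_unitaryGroup_iff).mp hA.eigenvectorUnitary.2
  conv_lhs => rw [hA.spectral_theorem, Unitary.conjStarAlgAut_apply]
  rw [charpoly_conj h1, charpoly_diagonal]
  rfl

lemma sum_f_eig {ι : Type*} [Fintype ι] {A : Matrix n n ℂ}
    (hA : A.IsHermitian) (c : ι → ℝ)
    (h : A.charpoly = ∏ i, (X - C ((c i : ℝ) : ℂ))) (f : ℝ → ℝ) :
    ∑ i, f (hA.eigenvalues i) = ∑ i, f (c i) := by
  have h1 : (Finset.univ.val.map (fun i => ((hA.eigenvalues i : ℝ) : ℂ)))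
      = Finset.univ.val.map (fun i => ((c i : ℝ) : ℂ)) := by
    have e1 : (∏ i, (X - C ((hA.eigenvalues i : ℝ) : ℂ))) = ∏ i, (X - C ((c i : ℝ) : ℂ)) := by
      rw [← charpoly_eq_prod hA, h]
    have := congrArg Polynomial.roots e1
    rwa [roots_prod, roots_prod] at this
  have key : (Finset.univ.val.map hA.eigenvalues) = Finset.univ.val.map c := by
    apply Multiset.map_injective Complex.ofReal_injective
    simpa [Multiset.map_map, Function.comp] using h1
  calc ∑ i, f (hA.eigenvalues i) = ((Finset.univ.val.map hA.eigenvalues).map f).sum := by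
        rw [Multiset.map_map]; rfl
    _ = ((Finset.univ.val.map c).map f).sum := by rw [key]
    _ = ∑ i, f (c i) := by rw [Multiset.map_map]; rfl

lemma trace_eq_sum_eig {A : Matrix n n ℂ} (hA : A.IsHermitian) :
    A.trace = ∑ i, (hA.eigenvalues i : ℂ) := by
  have h2 : star (hA.eigenvectorUnitary : Matrix n n ℂ) * (hA.eigenvectorUnitary : Matrix n n ℂ)
      = 1 := (Matrix.mem_unitaryGroup_iff').mp hA.eigenvectorUnitary.2
  conv_lhs => rw [hA.spectral_theorem, Unitary.conjStarAlgAut_apply]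
  rw [Matrix.trace_mul_cycle, h2, one_mul, Matrix.trace_diagonal]
  rfl

end Charpoly

lemma charpoly_kron {mA mB : Type*} [Fintype mA] [DecidableEq mA] [Fintype mB] [DecidableEq mB]
    {A : Matrix mA mA ℂ} {B : Matrix mB mB ℂ} (hA : A.IsHermitian) (hB : B.IsHermitian) :
    (A ⊗ₖ B).charpoly
      = ∏ p : mA × mB, (X - C ((hA.eigenvalues p.1 * hB.eigenvalues p.2 : ℝ) : ℂ)) := by
  have h1 : ((hA.eigenvectorUnitary : Matrix mA mA ℂ) ⊗ₖ (hB.eigenvectorUnitary : Matrix mB mB ℂ)) *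
      ((star (hA.eigenvectorUnitary : Matrix mA mA ℂ)) ⊗ₖ
        (star (hB.eigenvectorUnitary : Matrix mB mB ℂ))) = 1 := by
    rw [← Matrix.mul_kronecker_mul, (Matrix.mem_unitaryGroup_iff).mp hA.eigenvectorUnitary.2,
      (Matrix.mem_unitaryGroup_iff).mp hB.eigenvectorUnitary.2, Matrix.one_kronecker_one]
  conv_lhs => rw [hA.spectral_theorem, Unitary.conjStarAlgAut_apply, hB.spectral_theorem,
    Unitary.conjStarAlgAut_apply]
  rw [Matrix.mul_kronecker_mul, Matrix.mul_kronecker_mul, charpoly_conj h1,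
    Matrix.diagonal_kronecker_diagonal, charpoly_diagonal]
  refine Finset.prod_congr rfl fun p _ => ?_
  congr 1
  push_cast
  rfl

section MultiKraus

variable {n : Type*} [Fintype n] [DecidableEq n]

lemma conj_sandwich (A B : Matrix n n ℂ) : (A * B)ᴴ * (A * B) = Bᴴ * (Aᴴ * A) * B := by
  rw [Matrix.conjTranspose_mul]
  noncomm_ring

lemma multiKraus_succ {K : Type*} (U : Matrix n n ℂ) (X : K → Matrix n n ℂ) (t : ℕ)
    (idx : Fin (t+1) → K) :
    AFL.multiKraus U X (t+1) idx
      = (U * X (idx 0)) * AFL.multiKraus U X t (fun k => idx k.succ) := by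
  unfold AFL.multiKraus
  rw [List.ofFn_succ, List.prod_cons]

lemma multiKraus_cons {K : Type*} (U : Matrix n n ℂ) (X : K → Matrix n n ℂ) (t : ℕ)
    (k : K) (r : Fin t → K) :
    AFL.multiKraus U X (t+1) (Fin.cons k r) = (U * X k) * AFL.multiKraus U X t r := by
  simp only [multiKraus_succ, Fin.cons_zero, Fin.cons_succ]

lemma multiKraus_partition {K : Type*} [Fintype K] {U : Matrix n n ℂ} {X : K → Matrix n n ℂ}
    (hU : U ∈ Matrix.unitaryGroup n ℂ) (hX : AFL.IsPartition X) (t : ℕ) :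
    AFL.IsPartition (AFL.multiKraus U X t) := by
  have hU2 : Uᴴ * U = 1 := by
    have := (Matrix.mem_unitaryGroup_iff').mp hU
    rwa [Matrix.star_eq_conjTranspose] at this
  induction t with
  | zero =>
      unfold AFL.IsPartition
      simp [AFL.multiKraus]
  | succ t ih =>
      unfold AFL.IsPartition at ih ⊢
      have hterm : ∀ p : K × (Fin t → K),
          (AFL.multiKraus U X t p.2)ᴴ * ((X p.1)ᴴ * X p.1) * AFL.multiKraus U X t p.2
          = (AFL.multiKraus U X (t+1) (Fin.consEquiv (fun _ : Fin (t+1) => K) p))ᴴ *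
            AFL.multiKraus U X (t+1) (Fin.consEquiv (fun _ : Fin (t+1) => K) p) := by
        intro p
        show _ = (AFL.multiKraus U X (t+1) (Fin.cons p.1 p.2))ᴴ *
          AFL.multiKraus U X (t+1) (Fin.cons p.1 p.2)
        rw [multiKraus_cons, conj_sandwich, conj_sandwich, hU2, mul_one]
      have hs := Fintype.sum_equiv (Fin.consEquiv (fun _ : Fin (t+1) => K))
        (fun p => (AFL.multiKraus U X t p.2)ᴴ * ((X p.1)ᴴ * X p.1) * AFL.multiKraus U X t p.2)
        (fun idx => (AFL.multiKraus U X (t+1) idx)ᴴ * AFL.multiKraus U X (t+1) idx) hterm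
      rw [← hs]
      rw [Fintype.sum_prod_type_right]
      have : ∀ r : Fin t → K,
          ∑ k, (AFL.multiKraus U X t r)ᴴ * ((X k)ᴴ * X k) * AFL.multiKraus U X t r
          = (AFL.multiKraus U X t r)ᴴ * AFL.multiKraus U X t r := by
        intro r
        rw [← Finset.sum_mul, ← Finset.mul_sum, hX, mul_one]
      simp_rw [this]
      exact ih

lemma envState_trace {K : Type*} [Fintype K] {X : K → Matrix n n ℂ} (hX : AFL.IsPartition X)
    {ρ : Matrix n n ℂ} (hρ : ρ.trace = 1) : (AFL.envState X ρ).trace = 1 := by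
  calc (AFL.envState X ρ).trace = ∑ i, (X i * ρ * (X i)ᴴ).trace := rfl
    _ = ∑ i, ((X i)ᴴ * X i * ρ).trace := by
        refine Finset.sum_congr rfl fun i _ => ?_
        rw [Matrix.trace_mul_cycle]
    _ = (∑ i, (X i)ᴴ * X i * ρ).trace := (Matrix.trace_sum _ _).symm
    _ = 1 := by rw [← Finset.sum_mul, hX, one_mul, hρ]

open scoped MatrixOrder in
lemma envState_posSemidef {K : Type*} [Fintype K] (X : K → Matrix n n ℂ)
    {ρ : Matrix n n ℂ} (hρ : ρ.PosSemidef) : (AFL.envState X ρ).PosSemidef := by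
  set s := CFC.sqrt ρ with hs
  have hss : s * s = ρ := CFC.sqrt_mul_sqrt_self ρ (Matrix.nonneg_iff_posSemidef.mpr hρ)
  have hsh : sᴴ = s := (Matrix.nonneg_iff_posSemidef.mp (CFC.sqrt_nonneg ρ)).isHermitian
  have key : AFL.envState X ρ =
      (Matrix.of fun (k : K) (p : n × n) => (X k * s) p.1 p.2) *
      (Matrix.of fun (k : K) (p : n × n) => (X k * s) p.1 p.2)ᴴ := by
    ext i j
    have h1 : X i * ρ * (X j)ᴴ = (X i * s) * (X j * s)ᴴ := by
      rw [Matrix.conjTranspose_mul, hsh, ← hss]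
      noncomm_ring
    show (X i * ρ * (X j)ᴴ).trace = _
    rw [h1]
    simp only [Matrix.trace, Matrix.diag_apply, Matrix.mul_apply, Matrix.conjTranspose_apply,
      Matrix.of_apply, Fintype.sum_prod_type]
  rw [key]
  exact Matrix.posSemidef_self_mul_conjTranspose _

end MultiKraus

section Kron

variable {nA nB : Type*} [Fintype nA] [DecidableEq nA] [Fintype nB] [DecidableEq nB]
  {KA KB : Type*}

lemma multiKraus_kron (UA : Matrix nA nA ℂ) (UB : Matrix nB nB ℂ)
    (XA : KA → Matrix nA nA ℂ) (XB : KB → Matrix nB nB ℂ) (t : ℕ) (idx : Fin t → KA × KB) :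
    AFL.multiKraus (UA ⊗ₖ UB) (fun ij => XA ij.1 ⊗ₖ XB ij.2) t idx
      = AFL.multiKraus UA XA t (fun k => (idx k).1) ⊗ₖ
        AFL.multiKraus UB XB t (fun k => (idx k).2) := by
  induction t with
  | zero =>
      show (1 : Matrix (nA × nB) (nA × nB) ℂ) = (1 : Matrix nA nA ℂ) ⊗ₖ (1 : Matrix nB nB ℂ)
      rw [Matrix.one_kronecker_one]
  | succ t ih =>
      rw [multiKraus_succ, multiKraus_succ, multiKraus_succ, ih,
        ← Matrix.mul_kronecker_mul, ← Matrix.mul_kronecker_mul]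

lemma env_factor [Fintype KA] [Fintype KB]
    (ρA : Matrix nA nA ℂ) (ρB : Matrix nB nB ℂ) (UA : Matrix nA nA ℂ) (UB : Matrix nB nB ℂ)
    (XA : KA → Matrix nA nA ℂ) (XB : KB → Matrix nB nB ℂ) (t : ℕ) :
    AFL.envState (AFL.multiKraus (UA ⊗ₖ UB) (fun ij : KA × KB => XA ij.1 ⊗ₖ XB ij.2) t)
        (ρA ⊗ₖ ρB)
      = (AFL.envState (AFL.multiKraus UA XA t) ρA ⊗ₖ
          AFL.envState (AFL.multiKraus UB XB t) ρB).submatrix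
          (Equiv.arrowProdEquivProdArrow (Fin t) (fun _ => KA) (fun _ => KB))
          (Equiv.arrowProdEquivProdArrow (Fin t) (fun _ => KA) (fun _ => KB)) := by
  ext idx jdx
  show ((AFL.multiKraus (UA ⊗ₖ UB) (fun ij : KA × KB => XA ij.1 ⊗ₖ XB ij.2) t idx) * (ρA ⊗ₖ ρB) *
      (AFL.multiKraus (UA ⊗ₖ UB) (fun ij : KA × KB => XA ij.1 ⊗ₖ XB ij.2) t jdx)ᴴ).trace = _
  rw [multiKraus_kron, multiKraus_kron, kron_conjTranspose,
    ← Matrix.mul_kronecker_mul, ← Matrix.mul_kronecker_mul, Matrix.trace_kronecker]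
  rfl

end Kron

end AFLaux

end AFLaux


set_option maxHeartbeats 2000000 in
/-- Theorem 2, product-state case: for a product state ρ_A ⊗ ρ_B,
product dynamics and product partition, the cumulative AFL entropy is additive. -/
theorem stmt13 {nA nB : Type*} [Fintype nA] [DecidableEq nA] [Fintype nB] [DecidableEq nB]
    {KA KB : Type*} [Fintype KA] [DecidableEq KA] [Fintype KB] [DecidableEq KB]
    (ρA : Matrix nA nA ℂ) (ρB : Matrix nB nB ℂ)
    (hρA : AFL.IsDensity ρA) (hρB : AFL.IsDensity ρB)
    (UA : Matrix nA nA ℂ) (UB : Matrix nB nB ℂ)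
    (hUA : UA ∈ Matrix.unitaryGroup nA ℂ) (hUB : UB ∈ Matrix.unitaryGroup nB ℂ)
    (XA : KA → Matrix nA nA ℂ) (XB : KB → Matrix nB nB ℂ)
    (hXA : AFL.IsPartition XA) (hXB : AFL.IsPartition XB)
    (t : ℕ) :
    AFL.HAFL (ρA ⊗ₖ ρB) (UA ⊗ₖ UB) (fun ij : KA × KB => XA ij.1 ⊗ₖ XB ij.2) t =
      AFL.HAFL ρA UA XA t + AFL.HAFL ρB UB XB t := by
  classical
  set EA := AFL.envState (AFL.multiKraus UA XA t) ρA with hEA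
  set EB := AFL.envState (AFL.multiKraus UB XB t) ρB with hEB
  have pA : EA.PosSemidef := AFLaux.envState_posSemidef _ hρA.1
  have pB : EB.PosSemidef := AFLaux.envState_posSemidef _ hρB.1
  have trA : EA.trace = 1 :=
    AFLaux.envState_trace (AFLaux.multiKraus_partition hUA hXA t) hρA.2
  have trB : EB.trace = 1 :=
    AFLaux.envState_trace (AFLaux.multiKraus_partition hUB hXB t) hρB.2
  set a : (Fin t → KA) → ℝ := pA.1.eigenvalues with ha
  set b : (Fin t → KB) → ℝ := pB.1.eigenvalues with hb
  have suma : ∑ i, a i = 1 := by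
    have h := AFLaux.trace_eq_sum_eig pA.1
    rw [trA] at h
    have : ((∑ i, a i : ℝ) : ℂ) = 1 := by push_cast; rw [← h]
    exact_mod_cast this
  have sumb : ∑ i, b i = 1 := by
    have h := AFLaux.trace_eq_sum_eig pB.1
    rw [trB] at h
    have : ((∑ i, b i : ℝ) : ℂ) = 1 := by push_cast; rw [← h]
    exact_mod_cast this
  have hka : ∀ i, 0 ≤ a i := fun i => pA.eigenvalues_nonneg i
  have hkb : ∀ i, 0 ≤ b i := fun i => pB.eigenvalues_nonneg i
  -- the big environment state
  set e := Equiv.arrowProdEquivProdArrow (Fin t) (fun _ => KA) (fun _ => KB) with he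
  have hMherm : (EA ⊗ₖ EB).IsHermitian := by
    unfold Matrix.IsHermitian
    rw [AFLaux.kron_conjTranspose, pA.1.eq, pB.1.eq]
  have hfact := AFLaux.env_factor ρA ρB UA UB XA XB t
  have hEherm : (AFL.envState
      (AFL.multiKraus (UA ⊗ₖ UB) (fun ij : KA × KB => XA ij.1 ⊗ₖ XB ij.2) t)
      (ρA ⊗ₖ ρB)).IsHermitian := by
    rw [hfact]
    unfold Matrix.IsHermitian
    rw [Matrix.conjTranspose_submatrix, hMherm.eq]
  have hsub : ((EA ⊗ₖ EB).submatrix e e) = Matrix.reindex e.symm e.symm (EA ⊗ₖ EB) := by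
    simp [Matrix.reindex_apply]
  have hcp : (AFL.envState
      (AFL.multiKraus (UA ⊗ₖ UB) (fun ij : KA × KB => XA ij.1 ⊗ₖ XB ij.2) t)
      (ρA ⊗ₖ ρB)).charpoly
      = ∏ p : (Fin t → KA) × (Fin t → KB),
        (Polynomial.X - Polynomial.C ((a p.1 * b p.2 : ℝ) : ℂ)) := by
    rw [hfact]
    show ((EA ⊗ₖ EB).submatrix e e).charpoly = _
    rw [hsub, Matrix.charpoly_reindex, AFLaux.charpoly_kron pA.1 pB.1]
  have hsum := AFLaux.sum_f_eig hEherm (fun p : (Fin t → KA) × (Fin t → KB) => a p.1 * b p.2) hcp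
    (fun x => x * Real.log x)
  have hHA : AFL.HAFL ρA UA XA t = -∑ i, a i * Real.log (a i) := by
    rw [AFL.HAFL, AFL.vNEntropy, dif_pos pA.1]
  have hHB : AFL.HAFL ρB UB XB t = -∑ i, b i * Real.log (b i) := by
    rw [AFL.HAFL, AFL.vNEntropy, dif_pos pB.1]
  have hH : AFL.HAFL (ρA ⊗ₖ ρB) (UA ⊗ₖ UB) (fun ij : KA × KB => XA ij.1 ⊗ₖ XB ij.2) t
      = -∑ p : (Fin t → KA) × (Fin t → KB), (a p.1 * b p.2) * Real.log (a p.1 * b p.2) := by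
    rw [AFL.HAFL, AFL.vNEntropy, dif_pos hEherm]
    rw [hsum]
  rw [hH, hHA, hHB]
  have key : ∑ p : (Fin t → KA) × (Fin t → KB), (a p.1 * b p.2) * Real.log (a p.1 * b p.2)
      = (∑ i, a i * Real.log (a i)) + (∑ j, b j * Real.log (b j)) := by
    rw [Fintype.sum_prod_type]
    have : ∀ i, ∑ j, (a i * b j) * Real.log (a i * b j)
        = (a i * Real.log (a i)) * (∑ j, b j) + a i * (∑ j, b j * Real.log (b j)) := by
      intro i
      calc ∑ j, (a i * b j) * Real.log (a i * b j)
          = ∑ j, ((a i * Real.log (a i)) * b j + a i * (b j * Real.log (b j))) :=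
            Finset.sum_congr rfl fun j _ => by
              rw [AFLaux.mul_log_mul (hka i) (hkb j)]; ring
        _ = (a i * Real.log (a i)) * (∑ j, b j) + a i * (∑ j, b j * Real.log (b j)) := by
            rw [Finset.sum_add_distrib, ← Finset.mul_sum, ← Finset.mul_sum]
    simp_rw [this, sumb, mul_one]
    rw [Finset.sum_add_distrib, ← Finset.sum_mul, suma, one_mul]
  rw [key]
  ring
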